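/- For odd e > 1 divisible by 3, the sum (3/e)·Σ_{3 | f, f | e} μ(e/f)·(2^(2f) − 2) is a nonnegative integer, i.e., e divides 3·Σ_{3|f|e} μ(e/f)·(2^(2f)−2). -/

import Mathlib

open ArithmeticFunction ArithmeticFunction.Moebius Finset

-- sum over divisors of coprime product
lemma sum_divisors_coprime_mul {M : Type*} [AddCommMonoid M] {m n : ℕ}
    (h : m.Coprime n) (f : ℕ → M) :
    ∑ d ∈ (m * n).divisors, f d = ∑ x ∈ m.divisors, ∑ y ∈ n.divisors, f (x * y) := by
  rw [← Finset.sum_product', Nat.divisors_mul, Finset.mul_def, Finset.sum_image]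
  rintro ⟨x₁, y₁⟩ hx ⟨x₂, y₂⟩ hy hxy
  simp only [Finset.mem_coe, Finset.mem_product, Nat.mem_divisors] at hx hy hxy
  obtain ⟨⟨hx1, hm0⟩, hy1, hn0⟩ := hx
  obtain ⟨⟨hx2, _⟩, hy2, _⟩ := hy
  have hx12 : x₁ = x₂ := by
    have c1 : Nat.Coprime x₁ y₂ := Nat.Coprime.coprime_dvd_right hy2 (Nat.Coprime.coprime_dvd_left hx1 h)
    have c2 : Nat.Coprime x₂ y₁ := Nat.Coprime.coprime_dvd_right hy1 (Nat.Coprime.coprime_dvd_left hx2 h)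
    exact Nat.dvd_antisymm
      (c1.dvd_of_dvd_mul_right (hxy ▸ Dvd.intro y₁ rfl))
      (c2.dvd_of_dvd_mul_right (hxy.symm ▸ Dvd.intro y₂ rfl))
  have hy12 : y₁ = y₂ := by
    have hx0 : x₁ ≠ 0 := fun h0 => hm0 (Nat.eq_zero_of_zero_dvd (h0 ▸ hx1))
    exact Nat.eq_of_mul_eq_mul_left (Nat.pos_of_ne_zero hx0) (hx12 ▸ hxy)
  simp [hx12, hy12]

lemma prime_pow_inner (a : ℤ) {p : ℕ} (hp : p.Prime) (k s : ℕ) (hk : k ≠ 0) :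
    ∑ u ∈ (p ^ k).divisors, (μ (p ^ k / u) : ℤ) * a ^ (u * s)
      = a ^ (p ^ k * s) - a ^ (p ^ (k - 1) * s) := by
  obtain ⟨k', rfl⟩ := Nat.exists_eq_succ_of_ne_zero hk
  rw [Nat.sum_divisors_prime_pow hp]
  have hterm : ∀ i, i ∈ range (k' + 1 + 1) →
      (μ (p ^ (k' + 1) / p ^ i) : ℤ) * a ^ (p ^ i * s)
        = (μ (p ^ (k' + 1 - i)) : ℤ) * a ^ (p ^ i * s) := by
    intro i hi
    rw [mem_range] at hi
    rw [Nat.pow_div (by omega) hp.pos]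
  rw [Finset.sum_congr rfl hterm, Finset.sum_range_succ, Finset.sum_range_succ]
  have h1 : (k' + 1 : ℕ) - (k' + 1) = 0 := by omega
  have h2 : (k' + 1 : ℕ) - k' = 1 := by omega
  rw [h1, h2, pow_zero, moebius_apply_one, moebius_apply_prime_pow hp one_ne_zero]
  rw [Finset.sum_eq_zero]
  · simp only [Nat.succ_sub_one, zero_add, pow_succ']
    push_cast
    ring
  · intro i hi
    rw [mem_range] at hi
    rw [moebius_apply_prime_pow hp (by omega), if_neg (by omega)]
    ring

lemma fermat_step (a : ℤ) {p : ℕ} (hp : p.Prime) (s : ℕ) :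
    (p : ℤ) ∣ a ^ (p * s) - a ^ s := by
  haveI := Fact.mk hp
  have : ((a ^ (p * s) - a ^ s : ℤ) : ZMod p) = 0 := by
    push_cast
    rw [mul_comm, pow_mul, ZMod.pow_card]
    ring
  exact (ZMod.intCast_zmod_eq_zero_iff_dvd _ _).mp this

lemma prime_pow_dvd_diff (a : ℤ) {p : ℕ} (hp : p.Prime) (k s : ℕ) (hk : k ≠ 0) :
    (p ^ k : ℤ) ∣ a ^ (p ^ k * s) - a ^ (p ^ (k - 1) * s) := by
  obtain ⟨k', rfl⟩ := Nat.exists_eq_succ_of_ne_zero hk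
  have h := dvd_sub_pow_of_dvd_sub (R := ℤ) (p := p) (a := a ^ (p * s)) (b := a ^ s)
    (fermat_step a hp s) k'
  rw [← pow_mul, ← pow_mul] at h
  have e1 : p * s * p ^ k' = p ^ (k' + 1) * s := by ring
  have e2 : s * p ^ k' = p ^ (k' + 1 - 1) * s := by simp [Nat.succ_sub_one]; ring
  rw [e1, e2] at h
  exact_mod_cast h

-- Gauss congruence
lemma gauss_congruence (a : ℤ) (m : ℕ) (hm : m ≠ 0) :
    (m : ℤ) ∣ ∑ d ∈ m.divisors, (μ (m / d) : ℤ) * a ^ d := by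
  have key : ∀ p ∈ m.primeFactors,
      ((p ^ m.factorization p : ℕ) : ℤ) ∣ ∑ d ∈ m.divisors, (μ (m / d) : ℤ) * a ^ d := by
    intro p hp
    have hpp : p.Prime := Nat.prime_of_mem_primeFactors hp
    set k := m.factorization p with hkdef
    have hk : k ≠ 0 := by
      rw [hkdef]
      exact Finsupp.mem_support_iff.mp (by rw [Nat.support_factorization]; exact hp)
    obtain ⟨t, ht⟩ : p ^ k ∣ m := Nat.ordProj_dvd m p
    have hpt : ¬ p ∣ t := by
      intro hdvd
      have : p ^ (k + 1) ∣ m := by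
        obtain ⟨t', rfl⟩ := hdvd
        exact ⟨t', by rw [ht]; ring⟩
      exact Nat.pow_succ_factorization_not_dvd hm hpp this
    have hcop : Nat.Coprime (p ^ k) t :=
      Nat.Coprime.pow_left _ ((Nat.Prime.coprime_iff_not_dvd hpp).mpr hpt)
    have ht0 : t ≠ 0 := by rintro rfl; simp at ht; exact hm ht
    rw [ht, sum_divisors_coprime_mul hcop]
    rw [Finset.sum_comm]
    push_cast
    apply Finset.dvd_sum
    intro y hy
    rw [Nat.mem_divisors] at hy
    have hquot : ∀ x ∈ (p ^ k).divisors,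
        (μ (p ^ k * t / (x * y)) : ℤ) * a ^ (x * y)
          = (μ (t / y) : ℤ) * ((μ (p ^ k / x) : ℤ) * a ^ (x * y)) := by
      intro x hx
      rw [Nat.mem_divisors] at hx
      have : p ^ k * t / (x * y) = (p ^ k / x) * (t / y) :=
        (Nat.div_mul_div_comm hx.1 hy.1).symm
      rw [this, isMultiplicative_moebius.map_mul_of_coprime
        (Nat.Coprime.coprime_dvd_left (Nat.div_dvd_of_dvd hx.1)
          (Nat.Coprime.coprime_dvd_right (Nat.div_dvd_of_dvd hy.1) hcop))]
      push_cast
      ring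
    rw [Finset.sum_congr rfl hquot, ← Finset.mul_sum, prime_pow_inner a hpp k y hk]
    exact Dvd.dvd.mul_left (prime_pow_dvd_diff a hpp k y hk) _
  have hprod : ∏ p ∈ m.primeFactors, ((p ^ m.factorization p : ℕ) : ℤ) = (m : ℤ) := by
    rw [← Nat.cast_prod]
    norm_cast
    conv_rhs => rw [← Nat.factorization_prod_pow_eq_self hm]
    rfl
  rw [← hprod]
  apply Finset.prod_dvd_of_coprime _ key
  intro p hp q hq hpq
  have hpp := Nat.prime_of_mem_primeFactors hp
  have hqp := Nat.prime_of_mem_primeFactors hq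
  simp only [Function.onFun]
  rw [Nat.isCoprime_iff_coprime]
  exact ((Nat.coprime_primes hpp hqp).mpr hpq).pow _ _

open ArithmeticFunction ArithmeticFunction.Moebius in
theorem hecke7_count_nonneg_integer (e : ℕ) (he : Odd e) (he1 : 1 < e)
    (h3 : 3 ∣ e) :
    ∃ n : ℕ,
      3 * ∑ f ∈ e.divisors.filter (3 ∣ ·), (μ (e / f) * (2 ^ (2 * f) - 2) : ℤ)
        = e * n := by
  obtain ⟨m, rfl⟩ := h3
  have hm0 : m ≠ 0 := by rintro rfl; omega
  have hm1 : 1 ≤ m := Nat.one_le_iff_ne_zero.mpr hm0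
  -- reindex the sum
  have himg : (3 * m).divisors.filter (3 ∣ ·) = m.divisors.image (3 * ·) := by
    ext f
    simp only [Finset.mem_filter, Nat.mem_divisors, Finset.mem_image]
    constructor
    · rintro ⟨⟨hfe, hne⟩, g, rfl⟩
      exact ⟨g, ⟨(Nat.mul_dvd_mul_iff_left (by norm_num : 0 < 3)).mp hfe, hm0⟩, rfl⟩
    · rintro ⟨g, hg, rfl⟩
      exact ⟨⟨Nat.mul_dvd_mul_left 3 hg.1, by omega⟩, g, rfl⟩
  have hinj : ∀ x ∈ m.divisors, ∀ y ∈ m.divisors, 3 * x = 3 * y → x = y := by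
    intro x _ y _ h; omega
  rw [himg, Finset.sum_image hinj]
  have hterm : ∀ g ∈ m.divisors,
      (μ (3 * m / (3 * g)) : ℤ) * (2 ^ (2 * (3 * g)) - 2)
        = (μ (m / g) : ℤ) * ((64 : ℤ) ^ g - 2) := by
    intro g hg
    rw [Nat.mul_div_mul_left _ _ (by norm_num : 0 < 3)]
    congr 1
    rw [show 2 * (3 * g) = 6 * g by ring, pow_mul]
    norm_num
  rw [Finset.sum_congr rfl hterm]
  set S : ℤ := ∑ g ∈ m.divisors, (μ (m / g) : ℤ) * ((64 : ℤ) ^ g - 2) with hSdef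
  -- divisibility
  have hsplit : S = (∑ g ∈ m.divisors, (μ (m / g) : ℤ) * 64 ^ g)
      - 2 * ∑ g ∈ m.divisors, (μ (m / g) : ℤ) := by
    rw [hSdef, Finset.mul_sum, ← Finset.sum_sub_distrib]
    exact Finset.sum_congr rfl fun g _ => by ring
  have hmoe : ∑ g ∈ m.divisors, (μ (m / g) : ℤ) = if m = 1 then 1 else 0 := by
    rw [Nat.sum_div_divisors]
    have h := congrArg (fun f : ArithmeticFunction ℤ => f m) moebius_mul_coe_zeta
    simp only [coe_mul_zeta_apply, one_apply] at h
    exact h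
  have hdvd : (m : ℤ) ∣ S := by
    rw [hsplit]
    apply dvd_sub (gauss_congruence 64 m hm0)
    rw [hmoe]
    by_cases h : m = 1
    · simp [h]
    · simp [h]
  -- nonnegativity
  have hS0 : 0 ≤ S := by
    rw [hSdef, ← Nat.cons_self_properDivisors hm0, Finset.sum_cons,
      Nat.div_self (Nat.pos_of_ne_zero hm0), moebius_apply_one]
    have hbound : ∀ g ∈ m.properDivisors,
        -(64 : ℤ) ^ g ≤ (μ (m / g) : ℤ) * (64 ^ g - 2) := by
      intro g hg
      have h1 : |(μ (m / g) : ℤ)| ≤ 1 := by exact_mod_cast abs_moebius_le_one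
      have h2 : (-1 : ℤ) ≤ (μ (m / g) : ℤ) := neg_le_of_abs_le h1
      have h3 : (μ (m / g) : ℤ) ≤ 1 := le_of_abs_le h1
      have h4 : (1 : ℤ) ≤ 64 ^ g := one_le_pow₀ (by norm_num : (1:ℤ) ≤ 64)
      nlinarith [pow_pos (show (0:ℤ) < 64 by norm_num) g]
    have hsum1 : -(∑ g ∈ m.properDivisors, (64 : ℤ) ^ g)
        ≤ ∑ g ∈ m.properDivisors, (μ (m / g) : ℤ) * (64 ^ g - 2) := by
      rw [← Finset.sum_neg_distrib]
      exact Finset.sum_le_sum hbound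
    have hsub : m.properDivisors ⊆ Finset.range m := by
      intro g hg
      exact Finset.mem_range.mpr (Nat.mem_properDivisors.mp hg).2
    have hsum2 : ∑ g ∈ m.properDivisors, (64 : ℤ) ^ g
        ≤ ∑ g ∈ Finset.range m, (64 : ℤ) ^ g := by
      apply Finset.sum_le_sum_of_subset_of_nonneg hsub
      intro g _ _; positivity
    have hgeom : (∑ g ∈ Finset.range m, (64 : ℤ) ^ g) * (64 - 1) = 64 ^ m - 1 :=
      geom_sum_mul 64 m
    have hone : (1 : ℤ) ≤ ∑ g ∈ Finset.range m, (64 : ℤ) ^ g := by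
      have := Finset.single_le_sum (f := fun g => (64 : ℤ) ^ g)
        (fun g _ => by positivity) (Finset.mem_range.mpr hm1)
      simpa using this
    nlinarith [hsum1, hsum2]
  obtain ⟨c, hc⟩ := hdvd
  have hc0 : 0 ≤ c := by
    rcases le_or_gt 0 c with h | h
    · exact h
    · exfalso
      have : (m : ℤ) * c < 0 := mul_neg_of_pos_of_neg (by exact_mod_cast Nat.pos_of_ne_zero hm0) h
      omega
  refine ⟨c.toNat, ?_⟩
  rw [hc]
  push_cast [Int.toNat_of_nonneg hc0]
  ring
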